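/- arXiv:1509.06611 — 2 statements merged into one kernel-verified Lean document; each statement's English description precedes it below -/
import Mathlib

section
/- Monotonicity of Δ_{u,v}, Property 2 (Lemma 3(2)): let V : 𝒬 → ℝ be monotone and let u, v ∈ 𝒰 with u_n = m ∈ M_n for some SBS n ∈ {1,…,N}. If Q¹, Q² ∈ 𝒬 satisfy Q¹_{n,m} ≥ Q²_{n,m} and Q¹_{n′,m′} = Q²_{n′,m′} for all other (n′,m′) ∈ I, then Δ_{u,v}(Q¹) ≤ Δ_{u,v}(Q²); i.e., Δ_{u,v}(Q) is monotonically non-increasing in Q_{n,m}. -/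
open Finset

namespace HetNet

/-- The queue index set `I = {(n,m) : 0 ≤ n ≤ N, m ∈ M_n}`. -/
abbrev Idx {N M : ℕ} (cache : Fin (N + 1) → Finset (Fin M)) : Type :=
  {p : Fin (N + 1) × Fin M // p.2 ∈ cache p.1}

/-- The feasible action space `𝒰`: each BS schedules a cached content or idles (`none`),
and the MBS (BS `0`) and the SBSs do not operate concurrently. -/
def Feasible {N M : ℕ} (cache : Fin (N + 1) → Finset (Fin M))
    (u : Fin (N + 1) → Option (Fin M)) : Prop :=
  (∀ n m, u n = some m → m ∈ cache n) ∧ (u 0 ≠ none → ∀ n, n ≠ 0 → u n = none)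

instance {N M : ℕ} (cache : Fin (N + 1) → Finset (Fin M)) :
    DecidablePred (Feasible cache) := by
  intro u; unfold Feasible; infer_instance

instance {N M : ℕ} (cache : Fin (N + 1) → Finset (Fin M)) :
    Nonempty {u : Fin (N + 1) → Option (Fin M) // Feasible cache u} :=
  ⟨⟨fun _ => none, by unfold Feasible; exact ⟨fun _ _ h => (by cases h), fun h => absurd rfl h⟩⟩⟩

/-- Queue `(n,m)` is served by action `u`. -/
def Served {N M : ℕ} (u : Fin (N + 1) → Option (Fin M)) (n : Fin (N + 1)) (m : Fin M) : Prop :=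
  (n = 0 ∧ u 0 = some m) ∨ (n ≠ 0 ∧ (u 0 = some m ∨ u n = some m))

instance {N M : ℕ} (u : Fin (N + 1) → Option (Fin M)) (n : Fin (N + 1)) (m : Fin M) :
    Decidable (Served u n m) := by unfold Served; infer_instance

/-- The queue transition map `T(Q,u,A)`. -/
def T {N M : ℕ} {cache : Fin (N + 1) → Finset (Fin M)} (bound : Idx cache → ℕ)
    (Q : Idx cache → ℕ) (u : Fin (N + 1) → Option (Fin M)) (A : Idx cache → ℕ) :
    Idx cache → ℕ := fun i =>
  if Served u i.val.1 i.val.2 then min (A i) (bound i) else min (Q i + A i) (bound i)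

/-- The network power cost `p(u) = Σ_n p(n, u_n)` (with `p(n,0) = 0` for an idling BS). -/
def pcost {N M : ℕ} (p : Fin (N + 1) → Fin M → ℝ) (u : Fin (N + 1) → Option (Fin M)) : ℝ :=
  ∑ n, (u n).elim 0 (p n)

/-- The sum request queue length `d(Q)`. -/
def dcost {N M : ℕ} {cache : Fin (N + 1) → Finset (Fin M)} (Q : Idx cache → ℕ) : ℝ :=
  ∑ i, (Q i : ℝ)

/-- The per-stage cost `g(Q,u) = d(Q) + w·p(u)`. -/
def gcost {N M : ℕ} (p : Fin (N + 1) → Fin M → ℝ) (w : ℝ)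
    {cache : Fin (N + 1) → Finset (Fin M)}
    (Q : Idx cache → ℕ) (u : Fin (N + 1) → Option (Fin M)) : ℝ :=
  dcost Q + w * pcost p u

/-- The state-action cost `J_V(Q,u) = g(Q,u) + Σ_{A∈𝒜} P(A)·V(T(Q,u,A))`. -/
def Jcost {N M : ℕ} (p : Fin (N + 1) → Fin M → ℝ) (w : ℝ)
    {cache : Fin (N + 1) → Finset (Fin M)} (bound : Idx cache → ℕ)
    {ι : Type} [Fintype ι] (P : ι → ℝ) (A : ι → Idx cache → ℕ)
    (V : (Idx cache → ℕ) → ℝ) (Q : Idx cache → ℕ)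
    (u : Fin (N + 1) → Option (Fin M)) : ℝ :=
  gcost p w Q u + ∑ a, P a * V (T bound Q u (A a))

/-- Lemma 3(2): monotonicity of `Δ_{u,v}`, Property 2: let `V` be monotone
and let `u, v ∈ 𝒰` with `u_n = m ∈ M_n` for some SBS `n ∈ {1,…,N}`.  If `Q¹_{n,m} ≥ Q²_{n,m}`
and `Q¹, Q²` agree on all other coordinates of `I`, then `Δ_{u,v}(Q¹) ≤ Δ_{u,v}(Q²)`,
i.e. `Δ_{u,v}` is non-increasing in `Q_{n,m}`. -/
theorem delta_monotone_SBS {N M : ℕ} (cache : Fin (N + 1) → Finset (Fin M))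
    (hcache0 : ∀ m : Fin M, m ∈ cache 0)
    (bound : Idx cache → ℕ)
    (p : Fin (N + 1) → Fin M → ℝ) (hp : ∀ n m, 0 ≤ p n m)
    (w : ℝ) (hw : 0 ≤ w)
    {ι : Type} [Fintype ι] (P : ι → ℝ) (A : ι → Idx cache → ℕ)
    (hP : ∀ a, 0 ≤ P a) (hPsum : ∑ a, P a = 1)
    (V : (Idx cache → ℕ) → ℝ)
    (hV : ∀ Q₁ Q₂ : Idx cache → ℕ, (∀ i, Q₁ i ≤ bound i) → (∀ i, Q₂ i ≤ bound i) →
      (∀ i, Q₁ i ≤ Q₂ i) → V Q₁ ≤ V Q₂)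
    (u v : Fin (N + 1) → Option (Fin M)) (hu : Feasible cache u) (hv : Feasible cache v)
    (n : Fin (N + 1)) (hn : n ≠ 0) (m : Fin M) (hm : m ∈ cache n) (hun : u n = some m)
    (Q₁ Q₂ : Idx cache → ℕ)
    (hQ₁ : ∀ i, Q₁ i ≤ bound i) (hQ₂ : ∀ i, Q₂ i ≤ bound i)
    (heq : ∀ i : Idx cache, i.val ≠ (n, m) → Q₁ i = Q₂ i)
    (hge : Q₂ ⟨(n, m), hm⟩ ≤ Q₁ ⟨(n, m), hm⟩) :
    Jcost p w bound P A V Q₁ u - Jcost p w bound P A V Q₁ v ≤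
      Jcost p w bound P A V Q₂ u - Jcost p w bound P A V Q₂ v := by
  have hserved : Served u n m := Or.inr ⟨hn, Or.inr hun⟩
  have hle : ∀ i, Q₂ i ≤ Q₁ i := by
    intro i
    by_cases h : i.val = (n, m)
    · have : i = ⟨(n, m), hm⟩ := Subtype.ext h
      rw [this]; exact hge
    · exact (heq i h).ge
  have hTu : ∀ a, T bound Q₁ u (A a) = T bound Q₂ u (A a) := by
    intro a; funext i
    unfold T
    by_cases h : Served u i.val.1 i.val.2
    · simp [h]
    · have hne : i.val ≠ (n, m) := by
        intro hnm
        exact h (by rw [hnm]; exact hserved)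
      simp [h, heq i hne]
  have hTbound : ∀ (Q : Idx cache → ℕ) (uu : Fin (N+1) → Option (Fin M)) a i,
      T bound Q uu (A a) i ≤ bound i := by
    intro Q uu a i; unfold T
    split <;> exact min_le_right _ _
  have hTv : ∀ a, V (T bound Q₂ v (A a)) ≤ V (T bound Q₁ v (A a)) := by
    intro a
    refine hV _ _ (hTbound _ _ a) (hTbound _ _ a) ?_
    intro i; unfold T
    split
    · exact le_refl _
    · exact min_le_min (Nat.add_le_add_right (hle i) _) le_rfl
  have hsum : ∑ a, P a * V (T bound Q₁ u (A a)) - ∑ a, P a * V (T bound Q₁ v (A a))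
      ≤ ∑ a, P a * V (T bound Q₂ u (A a)) - ∑ a, P a * V (T bound Q₂ v (A a)) := by
    rw [← Finset.sum_sub_distrib, ← Finset.sum_sub_distrib]
    refine Finset.sum_le_sum fun a _ => ?_
    rw [← mul_sub, ← mul_sub, hTu a]
    exact mul_le_mul_of_nonneg_left (by linarith [hTv a]) (hP a)
  simp only [Jcost, gcost]
  linarith

end HetNet
end

section
/- Threshold structure of the suboptimal policy (Theorem 2, Property 2, first part): let V̂_{n,m} : {0,…,N_{n,m}} → ℝ be non-decreasing for every (n,m) ∈ I and set V̂(Q) = Σ_{(n,m)∈I} V̂_{n,m}(Q_{n,m}). Let û* ∈ 𝒰 be such that û*_n = m ∈ M_n for some BS n ∈ {0,…,N}. Then for every Q ∈ 𝒬 with Q_{n,m} ≥ φ̂_{û*}⁻(Q_{−n,−m}), one has Δ̂_{û*,v}(Q) ≤ 0 for every v ∈ 𝒰; in particular û* attains min_{u∈𝒰} Ĵ(Q,u), i.e., the suboptimal scheduling of content m by BS n is of threshold type in Q_{n,m}. -/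
open Finset

namespace HetNet

open scoped Classical in
/-- `Φ_u(Q_{−n,−m})`: the set of queue lengths `q ∈ {0,…,N_{n,m}}` at coordinate `i = (n,m)`
such that action `u` dominates every other feasible action at the state obtained from `Q`
by replacing its `(n,m)`-coordinate with `q`.  Its `Finset.max` (valued in `WithBot ℕ`,
`⊥` = −∞) is `φ_u⁺(Q_{−n,−m})`, and its `Finset.min` (valued in `WithTop ℕ`, `⊤` = +∞)
is `φ_u⁻(Q_{−n,−m})`. -/
noncomputable def Phi {N M : ℕ} (p : Fin (N + 1) → Fin M → ℝ) (w : ℝ)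
    {cache : Fin (N + 1) → Finset (Fin M)} (bound : Idx cache → ℕ)
    {ι : Type} [Fintype ι] (P : ι → ℝ) (A : ι → Idx cache → ℕ)
    (V : (Idx cache → ℕ) → ℝ) (u : Fin (N + 1) → Option (Fin M))
    (i : Idx cache) (Q : Idx cache → ℕ) : Finset ℕ :=
  (Finset.range (bound i + 1)).filter fun q =>
    ∀ v, Feasible cache v → v ≠ u →
      Jcost p w bound P A V (Function.update Q i q) u -
        Jcost p w bound P A V (Function.update Q i q) v ≤ 0

/-- Theorem 2, Property 2, first part: threshold structure of the
suboptimal policy: with the additive separable approximation `V̂(Q) = Σ V̂_{n,m}(Q_{n,m})`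
built from non-decreasing per-queue value functions, if `û* ∈ 𝒰` schedules `û*_n = m ∈ M_n`
and `Q ∈ 𝒬` satisfies `Q_{n,m} ≥ φ̂_{û*}⁻(Q_{−n,−m})`, then `Δ̂_{û*,v}(Q) ≤ 0` for every
`v ∈ 𝒰`; in particular `û*` attains `min_{u∈𝒰} Ĵ(Q,u)`. -/
theorem suboptimal_threshold {N M : ℕ} (cache : Fin (N + 1) → Finset (Fin M))
    (hcache0 : ∀ m : Fin M, m ∈ cache 0)
    (bound : Idx cache → ℕ)
    (p : Fin (N + 1) → Fin M → ℝ) (hp : ∀ n m, 0 ≤ p n m)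
    (w : ℝ) (hw : 0 ≤ w)
    {ι : Type} [Fintype ι] (P : ι → ℝ) (A : ι → Idx cache → ℕ)
    (hP : ∀ a, 0 ≤ P a) (hPsum : ∑ a, P a = 1)
    (Vv : (i : Idx cache) → ℕ → ℝ)
    (hVv : ∀ i : Idx cache, ∀ q q' : ℕ, q ≤ q' → q' ≤ bound i → Vv i q ≤ Vv i q')
    (ustar : Fin (N + 1) → Option (Fin M)) (hustar : Feasible cache ustar)
    (n : Fin (N + 1)) (m : Fin M) (hm : m ∈ cache n) (hun : ustar n = some m)
    (Q : Idx cache → ℕ) (hQ : ∀ i, Q i ≤ bound i)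
    (hthr : (Phi p w bound P A (fun Q' => ∑ j, Vv j (Q' j)) ustar ⟨(n, m), hm⟩ Q).min ≤
      (Q ⟨(n, m), hm⟩ : WithTop ℕ)) :
    (∀ v, Feasible cache v →
        Jcost p w bound P A (fun Q' => ∑ j, Vv j (Q' j)) Q ustar -
          Jcost p w bound P A (fun Q' => ∑ j, Vv j (Q' j)) Q v ≤ 0) ∧
      Jcost p w bound P A (fun Q' => ∑ j, Vv j (Q' j)) Q ustar =
        ⨅ u : {u // Feasible cache u},
          Jcost p w bound P A (fun Q' => ∑ j, Vv j (Q' j)) Q u.val := by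
  classical
  set V : (Idx cache → ℕ) → ℝ := fun Q' => ∑ j, Vv j (Q' j) with hV
  set i : Idx cache := ⟨(n, m), hm⟩ with hi
  have hserved : Served ustar n m := by
    by_cases h0 : n = 0
    · exact Or.inl ⟨h0, h0 ▸ hun⟩
    · exact Or.inr ⟨h0, Or.inr hun⟩
  -- Phi is nonempty
  have hne : (Phi p w bound P A V ustar i Q).Nonempty := by
    by_contra h
    rw [Finset.not_nonempty_iff_eq_empty] at h
    rw [h] at hthr
    simp at hthr
  set q0 : ℕ := (Phi p w bound P A V ustar i Q).min' hne with hq0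
  have hq0mem := (Phi p w bound P A V ustar i Q).min'_mem hne
  have hq0le : q0 ≤ Q i := by
    rw [← Finset.coe_min' hne] at hthr
    rw [hq0]
    exact WithTop.coe_le_coe.mp hthr
  have hq0prop : ∀ v, Feasible cache v → v ≠ ustar →
      Jcost p w bound P A V (Function.update Q i q0) ustar -
        Jcost p w bound P A V (Function.update Q i q0) v ≤ 0 := by
    have := hq0mem
    simp only [Phi, Finset.mem_filter] at this
    exact this.2
  -- Monotonicity of the difference in the coordinate i
  have key : ∀ v (q q' : ℕ), q ≤ q' → q' ≤ bound i →
      Jcost p w bound P A V (Function.update Q i q') ustar -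
        Jcost p w bound P A V (Function.update Q i q') v ≤
      Jcost p w bound P A V (Function.update Q i q) ustar -
        Jcost p w bound P A V (Function.update Q i q) v := by
    intro v q q' hqq hq'b
    have hTu : ∀ a, T bound (Function.update Q i q') ustar (A a)
        = T bound (Function.update Q i q) ustar (A a) := by
      intro a; funext j
      by_cases hs : Served ustar j.val.1 j.val.2
      · simp [T, hs]
      · have hji : j ≠ i := by
          rintro rfl; exact hs hserved
        simp [T, hs, Function.update_of_ne hji]
    have hTv : ∀ a, V (T bound (Function.update Q i q) v (A a))
        ≤ V (T bound (Function.update Q i q') v (A a)) := by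
      intro a
      apply Finset.sum_le_sum
      intro j _
      by_cases hji : j = i
      · rw [hji]
        by_cases hs : Served v i.val.1 i.val.2
        · simp [T, hs]
        · simp only [T, hs, if_false, Function.update_self]
          exact hVv i _ _ (min_le_min (Nat.add_le_add_right hqq _) le_rfl) (min_le_right _ _)
      · simp [T, Function.update_of_ne hji]
    have e1 : ∑ a, P a * V (T bound (Function.update Q i q') ustar (A a))
        = ∑ a, P a * V (T bound (Function.update Q i q) ustar (A a)) := by
      refine Finset.sum_congr rfl fun a _ => by rw [hTu a]
    have e2 : ∑ a, P a * V (T bound (Function.update Q i q) v (A a))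
        ≤ ∑ a, P a * V (T bound (Function.update Q i q') v (A a)) :=
      Finset.sum_le_sum fun a _ => mul_le_mul_of_nonneg_left (hTv a) (hP a)
    simp only [Jcost, gcost]
    rw [e1]
    linarith
  have hDelta : ∀ v, Feasible cache v →
      Jcost p w bound P A V Q ustar - Jcost p w bound P A V Q v ≤ 0 := by
    intro v hv
    by_cases hvu : v = ustar
    · rw [hvu]; simp
    · have h0 := hq0prop v hv hvu
      have hk := key v q0 (Q i) hq0le (hQ i)
      rw [Function.update_eq_self] at hk
      linarith
  refine ⟨hDelta, ?_⟩
  have hlb : ∀ u' : {u // Feasible cache u},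
      Jcost p w bound P A V Q ustar ≤ Jcost p w bound P A V Q u'.val :=
    fun u' => by linarith [hDelta u'.val u'.2]
  exact le_antisymm (le_ciInf hlb)
    (ciInf_le (Set.Finite.bddBelow (Set.finite_range _)) (⟨ustar, hustar⟩ : {u // Feasible cache u}))

end HetNet
end
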